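/- There exist a constant c > 0 and N₀ ≥ 1 such that for every real N ≥ N₀ the following holds. Define the parallelograms P₁ = {(τ,ξ) ∈ ℝ² : |ξ − N| ≤ N^{−3/2}, |τ − (5N⁴ξ − 4N⁵)| ≤ 1/2}, P₂ = {(τ,ξ) ∈ ℝ² : (−τ,−ξ) ∈ P₁}, and R₁ = {(τ,ξ) ∈ ℝ² : (1/2)N^{−3/2} ≤ ξ ≤ (3/4)N^{−3/2}, |τ − 5N⁴ξ| ≤ 1/2}. Then for every (τ,ξ) ∈ R₁ one has (χ_{P₁} * χ_{P₂})(τ,ξ) ≥ c N^{−3/2}. -/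

import Mathlib

open MeasureTheory Set

noncomputable section

/-- the parallelogram `P₁`. -/
def P1 (N : ℝ) : Set (ℝ × ℝ) :=
  {p | |p.2 - N| ≤ N ^ (-(3:ℝ)/2) ∧ |p.1 - (5 * N ^ 4 * p.2 - 4 * N ^ 5)| ≤ 1/2}

/-- the parallelogram `P₂ = -P₁`. -/
def P2 (N : ℝ) : Set (ℝ × ℝ) := {p | (-p.1, -p.2) ∈ P1 N}

/-- the target region `R₁`. -/
def R1 (N : ℝ) : Set (ℝ × ℝ) :=
  {p | N ^ (-(3:ℝ)/2) / 2 ≤ p.2 ∧ p.2 ≤ 3/4 * N ^ (-(3:ℝ)/2) ∧ |p.1 - 5 * N ^ 4 * p.2| ≤ 1/2}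

/-- convolution on `ℝ²` (real-valued). -/
def convR (f g : ℝ × ℝ → ℝ) : ℝ × ℝ → ℝ := fun p => ∫ q, f q * g (p - q)

lemma P1_meas (N : ℝ) : MeasurableSet (P1 N) := by
  apply MeasurableSet.inter
  · exact measurableSet_le ((measurable_snd.sub measurable_const).abs) measurable_const
  · exact measurableSet_le
      ((measurable_fst.sub ((measurable_const.mul measurable_snd).sub measurable_const)).abs)
      measurable_const

lemma P2_meas (N : ℝ) : MeasurableSet (P2 N) :=
  (P1_meas N).preimage (measurable_fst.neg.prodMk measurable_snd.neg)

theorem stmt19 :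
    ∃ c : ℝ, 0 < c ∧ ∃ N₀ : ℝ, 1 ≤ N₀ ∧ ∀ N : ℝ, N₀ ≤ N → ∀ p ∈ R1 N,
      c * N ^ (-(3:ℝ)/2)
        ≤ convR ((P1 N).indicator fun _ => (1:ℝ)) ((P2 N).indicator fun _ => (1:ℝ)) p := by
  refine ⟨1/2, by norm_num, 1, le_refl 1, fun N hN p hp => ?_⟩
  have hN0 : (0:ℝ) < N := by linarith
  set δ : ℝ := N ^ (-(3:ℝ)/2) with hδdef
  have hδ : 0 < δ := Real.rpow_pos_of_pos hN0 _
  obtain ⟨hp1, hp2, hp3⟩ := hp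
  rw [show N ^ (-(3:ℝ)/2) / 2 = δ / 2 from rfl] at hp1
  rw [show (3:ℝ)/4 * N ^ (-(3:ℝ)/2) = 3/4 * δ from rfl] at hp2
  -- the intersection set
  set S : Set (ℝ × ℝ) := P1 N ∩ ((fun q => p - q) ⁻¹' P2 N) with hSdef
  have hSmeas : MeasurableSet S :=
    (P1_meas N).inter ((P2_meas N).preimage (measurable_const.sub measurable_id))
  -- S is contained in a finite-volume box
  have hSfin : volume S < ⊤ := by
    have hsub : S ⊆ Icc (5*N^4*(N-δ) - 4*N^5 - 1/2) (5*N^4*(N+δ) - 4*N^5 + 1/2) ×ˢ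
        Icc (N - δ) (N + δ) := by
      rintro ⟨τ, ξ⟩ ⟨⟨h1, h2⟩, -⟩
      rw [abs_le] at h1 h2
      have hN4 : (0:ℝ) ≤ 5 * N ^ 4 := by positivity
      constructor
      · simp only [mem_Icc]
        constructor <;> nlinarith [h1.1, h1.2, h2.1, h2.2]
      · simp only [mem_Icc]; constructor <;> linarith [h1.1, h1.2]
    calc volume S ≤ _ := measure_mono hsub
      _ < ⊤ := by
          rw [Measure.volume_eq_prod, Measure.prod_prod]
          exact ENNReal.mul_lt_top (by simp) (by simp)
  -- the convolution equals the measure of S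
  have hconv : convR ((P1 N).indicator fun _ => (1:ℝ)) ((P2 N).indicator fun _ => (1:ℝ)) p
      = (volume S).toReal := by
    have : (fun q => (P1 N).indicator (fun _ => (1:ℝ)) q *
        (P2 N).indicator (fun _ => (1:ℝ)) (p - q)) = S.indicator fun _ => (1:ℝ) := by
      funext q
      by_cases h1 : q ∈ P1 N <;> by_cases h2 : p - q ∈ P2 N <;>
        simp [Set.indicator_apply, h1, h2, hSdef, Set.mem_inter_iff]
    rw [convR, this, integral_indicator_const _ hSmeas, smul_eq_mul, mul_one]
    rfl
  rw [hconv]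
  -- the sheared rectangle T' and its swap T ⊆ S
  set e : ℝ := p.1 - 5*N^4*p.2 with hedef
  set m : ℝ := max e 0 with hmdef
  have hm0 : 0 ≤ m := le_max_right _ _
  have hm : m ≤ 1/2 := by
    rw [abs_le] at hp3
    exact max_le hp3.2 (by norm_num)
  have hme0 : 0 ≤ m - e := by simp [hmdef, le_max_left]
  have hme : m - e ≤ 1/2 := by
    rw [abs_le] at hp3
    rcases max_cases e 0 with ⟨h, -⟩ | ⟨h, -⟩ <;> rw [hmdef, h] <;> linarith [hp3.1]
  set a : ℝ := N + p.2 - δ with hadef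
  set b : ℝ := N + δ with hbdef
  set g : ℝ → ℝ := fun y => 5*N^4*y - 4*N^5 + m - 1/2 with hgdef
  set T' : Set (ℝ × ℝ) := regionBetween g (fun y => g y + 1/2) (Ioo a b) with hT'def
  have hgm : Measurable g := by
    apply Measurable.add_const
    exact ((measurable_const.mul measurable_id).sub measurable_const).add_const _
  have hT'meas : MeasurableSet T' :=
    measurableSet_regionBetween hgm (hgm.add_const _) measurableSet_Ioo
  have hTsub : Prod.swap ⁻¹' T' ⊆ S := by
    rintro ⟨τ, ξ⟩ ⟨hξ, hτ⟩
    simp only [Prod.swap_prod_mk, mem_Ioo] at hξ hτ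
    have hξ1 : N + p.2 - δ < ξ := hξ.1
    have hξ2 : ξ < N + δ := hξ.2
    have hτ1 : 5*N^4*ξ - 4*N^5 + m - 1/2 < τ := hτ.1
    have hτ2 : τ < 5*N^4*ξ - 4*N^5 + m - 1/2 + 1/2 := hτ.2
    constructor
    · exact ⟨abs_le.2 ⟨by linarith, by linarith⟩, abs_le.2 ⟨by linarith, by linarith⟩⟩
    · show (-(p - (τ,ξ)).1, -(p - (τ,ξ)).2) ∈ P1 N
      refine ⟨abs_le.2 ⟨?_, ?_⟩, abs_le.2 ⟨?_, ?_⟩⟩ <;>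
        simp only [Prod.fst_sub, Prod.snd_sub, neg_sub] <;> linarith [hedef]
  -- volume of the sheared rectangle
  have hT'vol : volume T' = ENNReal.ofReal (1/2) * ENNReal.ofReal (b - a) := by
    rw [hT'def, Measure.volume_eq_prod,
      volume_regionBetween_eq_lintegral' hgm (hgm.add_const _) measurableSet_Ioo]
    have : ∀ y : ℝ, ((fun y => g y + 1/2) - g) y = 1/2 := fun y => by
      simp [Pi.sub_apply]
    simp only [this]
    rw [setLIntegral_const, Real.volume_Ioo]
  have hTvol : ENNReal.ofReal (1/2) * ENNReal.ofReal (b - a) ≤ volume S := by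
    calc ENNReal.ofReal (1/2) * ENNReal.ofReal (b - a) = volume T' := hT'vol.symm
      _ = volume (Prod.swap ⁻¹' T') := by
          rw [Measure.volume_eq_prod]
          exact ((Measure.measurePreserving_swap (μ := volume) (ν := volume)).measure_preimage
            hT'meas.nullMeasurableSet).symm
      _ ≤ volume S := measure_mono hTsub
  have hfinal : ENNReal.ofReal (1/2 * δ) ≤ volume S := by
    refine le_trans ?_ hTvol
    rw [← ENNReal.ofReal_mul (by norm_num)]
    apply ENNReal.ofReal_le_ofReal
    have hba : b - a = 2*δ - p.2 := by rw [hadef, hbdef]; ring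
    rw [hba]; linarith
  calc (1/2:ℝ) * N ^ (-(3:ℝ)/2) = (ENNReal.ofReal (1/2 * δ)).toReal := by
        rw [ENNReal.toReal_ofReal (by positivity)]
      _ ≤ (volume S).toReal := ENNReal.toReal_mono hSfin.ne hfinal
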